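/- Suppose Φ_g ∈ M is a ground state with radially symmetric potential and E_soc(Φ_g) = 0. Then for every θ ∈ (0,2π), the rotated function Φ^θ(x) = Φ_g(R(θ)x) is also a ground state. Conversely, if E_soc(Φ_g) < 0, then for every θ ∈ (0,2π), E(Φ^θ) > E(Φ_g), so Φ^θ is not a ground state. -/

import Mathlib

open MeasureTheory Complex

noncomputable section

abbrev Pt (d : ℕ) := EuclideanSpace ℝ (Fin d)

/-- Classical partial derivative `∂_j f`, junk `0` if `j ≥ d`. -/
def pdC (d : ℕ) (f : Pt d → ℂ) (j : ℕ) (x : Pt d) : ℂ :=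
  if h : j < d then fderiv ℝ f x (EuclideanSpace.single ⟨j, h⟩ 1) else 0

def nthC (d : ℕ) (x : Pt d) (j : ℕ) : ℝ := if h : j < d then x ⟨j, h⟩ else 0

/-- `L₀ = i∂ₓ + ∂_y`. -/
def L0op (d : ℕ) (f : Pt d → ℂ) (x : Pt d) : ℂ := Complex.I * pdC d f 0 x + pdC d f 1 x

/-- `L₁ = i∂ₓ − ∂_y`. -/
def L1op (d : ℕ) (f : Pt d → ℂ) (x : Pt d) : ℂ := Complex.I * pdC d f 0 x - pdC d f 1 x

/-- Rotation operator `L_z = −i(x∂_y − y∂ₓ)`. -/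
def Lzop (d : ℕ) (f : Pt d → ℂ) (x : Pt d) : ℂ :=
  -Complex.I * (((nthC d x 0 : ℝ) : ℂ) * pdC d f 1 x - ((nthC d x 1 : ℝ) : ℂ) * pdC d f 0 x)

/-- `|∇f|²`. -/
def gradsq (d : ℕ) (f : Pt d → ℂ) (x : Pt d) : ℝ := ∑ j : Fin d, ‖pdC d f j x‖ ^ 2

/-- Total density `ρ = |φ₁|² + |φ₀|² + |φ₋₁|²`. -/
def rho (d : ℕ) (φ1 φ0 φm1 : Pt d → ℂ) (x : Pt d) : ℝ :=
  ‖φ1 x‖ ^ 2 + ‖φ0 x‖ ^ 2 + ‖φm1 x‖ ^ 2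

/-- Spin vector magnitude squared `|F|²`. -/
def Fsq (d : ℕ) (φ1 φ0 φm1 : Pt d → ℂ) (x : Pt d) : ℝ :=
  2 * ((((starRingEnd ℂ) (φ1 x) + (starRingEnd ℂ) (φm1 x)) * φ0 x).re) ^ 2
    + 2 * ((φ0 x * ((starRingEnd ℂ) (φm1 x) - (starRingEnd ℂ) (φ1 x))).im) ^ 2
    + (‖φ1 x‖ ^ 2 - ‖φm1 x‖ ^ 2) ^ 2

/-- The (real) SOC integrand `Φ†SΦ = φ̄₁L₀φ₀ + φ̄₀(L₀φ₋₁ + L₁φ₁) + φ̄₋₁L₁φ₀`. -/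
def socDen (d : ℕ) (φ1 φ0 φm1 : Pt d → ℂ) (x : Pt d) : ℝ :=
  ((starRingEnd ℂ) (φ1 x) * L0op d φ0 x
    + (starRingEnd ℂ) (φ0 x) * (L0op d φm1 x + L1op d φ1 x)
    + (starRingEnd ℂ) (φm1 x) * L1op d φ0 x).re

/-- The (real) rotation integrand `φ̄ L_z φ`. -/
def rotDen (d : ℕ) (φ : Pt d → ℂ) (x : Pt d) : ℝ :=
  ((starRingEnd ℂ) (φ x) * Lzop d φ x).re

/-- Kinetic energy. -/
def Ekin (d : ℕ) (φ1 φ0 φm1 : Pt d → ℂ) : ℝ :=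
  (1 / 2 : ℝ) * ∫ x, (gradsq d φ1 x + gradsq d φ0 x + gradsq d φm1 x)

/-- Potential energy. -/
def Epot (d : ℕ) (V : Pt d → ℝ) (φ1 φ0 φm1 : Pt d → ℂ) : ℝ :=
  ∫ x, V x * rho d φ1 φ0 φm1 x

/-- Interaction (spin) energy. -/
def Espin (d : ℕ) (c0 c1 : ℝ) (φ1 φ0 φm1 : Pt d → ℂ) : ℝ :=
  ∫ x, (c0 / 2 * (rho d φ1 φ0 φm1 x) ^ 2 + c1 / 2 * Fsq d φ1 φ0 φm1 x)

/-- Rotation energy. -/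
def Erot (d : ℕ) (Ω : ℝ) (φ1 φ0 φm1 : Pt d → ℂ) : ℝ :=
  -Ω * ∫ x, (rotDen d φ1 x + rotDen d φ0 x + rotDen d φm1 x)

/-- Spin-orbit coupling energy. -/
def Esoc (d : ℕ) (γ : ℝ) (φ1 φ0 φm1 : Pt d → ℂ) : ℝ :=
  -γ * ∫ x, socDen d φ1 φ0 φm1 x

/-- Total energy of the rotating SOC spin-1 BEC. -/
def Etot (d : ℕ) (V : Pt d → ℝ) (c0 c1 Ω γ : ℝ) (φ1 φ0 φm1 : Pt d → ℂ) : ℝ :=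
  Ekin d φ1 φ0 φm1 + Epot d V φ1 φ0 φm1 + Espin d c0 c1 φ1 φ0 φm1
    + Erot d Ω φ1 φ0 φm1 + Esoc d γ φ1 φ0 φm1

/-- The constraint manifold `M`: triples in `H¹ ∩ L²_V` (with all energy integrands
integrable) of unit total mass. -/
def InM (d : ℕ) (V : Pt d → ℝ) (φ1 φ0 φm1 : Pt d → ℂ) : Prop :=
  Differentiable ℝ φ1 ∧ Differentiable ℝ φ0 ∧ Differentiable ℝ φm1 ∧
  Integrable (fun x => rho d φ1 φ0 φm1 x) ∧
  Integrable (fun x => gradsq d φ1 x + gradsq d φ0 x + gradsq d φm1 x) ∧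
  Integrable (fun x => V x * rho d φ1 φ0 φm1 x) ∧
  Integrable (fun x => (rho d φ1 φ0 φm1 x) ^ 2) ∧
  Integrable (fun x => Fsq d φ1 φ0 φm1 x) ∧
  Integrable (fun x => rotDen d φ1 x + rotDen d φ0 x + rotDen d φm1 x) ∧
  Integrable (fun x => socDen d φ1 φ0 φm1 x) ∧
  (∫ x, rho d φ1 φ0 φm1 x) = 1

/-- Rotation of `ℝ^d` by angle `θ` about the `z`-axis (planar rotation in the
first two coordinates). -/
def RotPt (d : ℕ) (θ : ℝ) (x : Pt d) : Pt d :=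
  (WithLp.equiv 2 (∀ _ : Fin d, ℝ)).symm fun j =>
    if (j : ℕ) = 0 then Real.cos θ * nthC d x 0 - Real.sin θ * nthC d x 1
    else if (j : ℕ) = 1 then Real.sin θ * nthC d x 0 + Real.cos θ * nthC d x 1
    else x j

lemma RotPt_apply (d : ℕ) (θ : ℝ) (x : Pt d) (j : Fin d) :
    RotPt d θ x j = if (j : ℕ) = 0 then Real.cos θ * nthC d x 0 - Real.sin θ * nthC d x 1
      else if (j : ℕ) = 1 then Real.sin θ * nthC d x 0 + Real.cos θ * nthC d x 1
      else x j := rfl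

lemma nthC_lt (d : ℕ) (x : Pt d) (j : ℕ) (h : j < d) : nthC d x j = x ⟨j, h⟩ := by
  simp [nthC, h]

lemma nthC_add (d : ℕ) (x y : Pt d) (j : ℕ) : nthC d (x + y) j = nthC d x j + nthC d y j := by
  unfold nthC; split <;> simp [PiLp.add_apply]

lemma nthC_smul (d : ℕ) (c : ℝ) (x : Pt d) (j : ℕ) : nthC d (c • x) j = c * nthC d x j := by
  unfold nthC; split <;> simp [PiLp.smul_apply]

lemma RotPt_add (d : ℕ) (θ : ℝ) (x y : Pt d) :
    RotPt d θ (x + y) = RotPt d θ x + RotPt d θ y := by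
  ext j
  simp only [RotPt_apply, PiLp.add_apply, nthC_add]
  split_ifs <;> ring

lemma RotPt_smul (d : ℕ) (θ : ℝ) (c : ℝ) (x : Pt d) :
    RotPt d θ (c • x) = c • RotPt d θ x := by
  ext j
  simp only [RotPt_apply, PiLp.smul_apply, nthC_smul, smul_eq_mul]
  split_ifs <;> ring

lemma nthC_rot (d : ℕ) (hd : 2 ≤ d) (θ : ℝ) (x : Pt d) :
    nthC d (RotPt d θ x) 0 = Real.cos θ * nthC d x 0 - Real.sin θ * nthC d x 1
    ∧ nthC d (RotPt d θ x) 1 = Real.sin θ * nthC d x 0 + Real.cos θ * nthC d x 1 := by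
  have h0 : (0:ℕ) < d := by omega
  have h1 : (1:ℕ) < d := by omega
  constructor
  · rw [nthC_lt d _ 0 h0, RotPt_apply]; simp
  · rw [nthC_lt d _ 1 h1, RotPt_apply]; simp

lemma RotPt_rot (d : ℕ) (hd : 2 ≤ d) (θ θ' : ℝ) (x : Pt d) :
    RotPt d θ (RotPt d θ' x) = RotPt d (θ + θ') x := by
  ext j
  obtain ⟨e0, e1⟩ := nthC_rot d hd θ' x
  simp only [RotPt_apply, e0, e1, Real.cos_add, Real.sin_add]
  split_ifs with hj hj'
  · ring
  · ring
  · rfl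

lemma RotPt_zero (d : ℕ) (x : Pt d) : RotPt d 0 x = x := by
  ext j
  rw [RotPt_apply]
  split_ifs with hj hj'
  · simp [nthC_lt d x 0 (by omega : 0 < d)]
    exact congrArg x (Fin.ext hj.symm)
  · simp [nthC_lt d x 1 (by omega : 1 < d)]
    exact congrArg x (Fin.ext hj'.symm)
  · rfl

lemma RotPt_norm (d : ℕ) (hd : 2 ≤ d) (θ : ℝ) (x : Pt d) :
    ‖RotPt d θ x‖ = ‖x‖ := by
  have h0 : (0:ℕ) < d := by omega
  have h1 : (1:ℕ) < d := by omega
  set i0 : Fin d := ⟨0, h0⟩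
  set i1 : Fin d := ⟨1, h1⟩
  have hne : i0 ≠ i1 := by simp [i0, i1, Fin.ext_iff]
  rw [EuclideanSpace.norm_eq, EuclideanSpace.norm_eq]
  congr 1
  have key : ∀ j : Fin d, j ∉ ({i0, i1} : Finset (Fin d)) →
      ‖RotPt d θ x j‖ ^ 2 - ‖x j‖ ^ 2 = 0 := by
    intro j hj
    have hj0 : (j : ℕ) ≠ 0 := by
      intro h; exact (by simp [Finset.mem_insert, Fin.ext_iff, i0, i1, h] at hj)
    have hj1 : (j : ℕ) ≠ 1 := by
      intro h; exact (by simp [Finset.mem_insert, Fin.ext_iff, i0, i1, h] at hj)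
    rw [RotPt_apply]; simp [hj0, hj1]
  have hsub : ∑ j ∈ ({i0, i1} : Finset (Fin d)), (‖RotPt d θ x j‖ ^ 2 - ‖x j‖ ^ 2)
      = ∑ j : Fin d, (‖RotPt d θ x j‖ ^ 2 - ‖x j‖ ^ 2) :=
    Finset.sum_subset (Finset.subset_univ _) (fun j _ hj => key j hj)
  rw [Finset.sum_pair hne] at hsub
  have e0 : RotPt d θ x i0 = Real.cos θ * x i0 - Real.sin θ * x i1 := by
    rw [RotPt_apply]; simp [i0, i1, nthC_lt d x 0 h0, nthC_lt d x 1 h1]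
  have e1 : RotPt d θ x i1 = Real.sin θ * x i0 + Real.cos θ * x i1 := by
    rw [RotPt_apply]; simp [i1, i0, nthC_lt d x 0 h0, nthC_lt d x 1 h1]
  have hz : (‖RotPt d θ x i0‖ ^ 2 - ‖x i0‖ ^ 2) + (‖RotPt d θ x i1‖ ^ 2 - ‖x i1‖ ^ 2) = 0 := by
    rw [e0, e1]
    simp only [Real.norm_eq_abs]
    simp only [_root_.sq_abs]
    linear_combination (Real.sin_sq_add_cos_sq θ) * ((x i0)^2 + (x i1)^2)
  rw [hz] at hsub
  have := Finset.sum_sub_distrib (s := (Finset.univ : Finset (Fin d)))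
    (f := fun j => ‖RotPt d θ x j‖ ^ 2) (g := fun j => ‖x j‖ ^ 2)
  rw [← hsub] at this
  linarith [this]

def rotLI (d : ℕ) (hd : 2 ≤ d) (θ : ℝ) : Pt d ≃ₗᵢ[ℝ] Pt d where
  toLinearEquiv :=
    { toFun := RotPt d θ
      map_add' := RotPt_add d θ
      map_smul' := RotPt_smul d θ
      invFun := RotPt d (-θ)
      left_inv := fun x => by
        show RotPt d (-θ) (RotPt d θ x) = x
        rw [RotPt_rot d hd, neg_add_cancel, RotPt_zero]
      right_inv := fun x => by
        show RotPt d θ (RotPt d (-θ) x) = x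
        rw [RotPt_rot d hd, add_neg_cancel, RotPt_zero] }
  norm_map' := RotPt_norm d hd θ

@[simp] lemma rotLI_apply (d : ℕ) (hd : 2 ≤ d) (θ : ℝ) (x : Pt d) :
    rotLI d hd θ x = RotPt d θ x := rfl


lemma single_nth (d : ℕ) (i : Fin d) (k : ℕ) (hk : k < d) :
    nthC d (EuclideanSpace.single i (1:ℝ)) k = if (i : ℕ) = k then 1 else 0 := by
  rw [nthC_lt d _ k hk, EuclideanSpace.single_apply]
  simp [Fin.ext_iff, eq_comm]

lemma RotPt_single0 (d : ℕ) (h0 : 0 < d) (h1 : 1 < d) (θ : ℝ) :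
    RotPt d θ (EuclideanSpace.single (⟨0, h0⟩ : Fin d) (1:ℝ))
      = Real.cos θ • EuclideanSpace.single (⟨0, h0⟩ : Fin d) (1:ℝ)
        + Real.sin θ • EuclideanSpace.single (⟨1, h1⟩ : Fin d) (1:ℝ) := by
  ext j
  simp only [RotPt_apply, PiLp.add_apply, PiLp.smul_apply, smul_eq_mul,
    single_nth d _ 0 h0, single_nth d _ 1 h1, EuclideanSpace.single_apply]
  split_ifs with hj hj' <;> simp_all [Fin.ext_iff] <;> ring

lemma RotPt_single1 (d : ℕ) (h0 : 0 < d) (h1 : 1 < d) (θ : ℝ) :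
    RotPt d θ (EuclideanSpace.single (⟨1, h1⟩ : Fin d) (1:ℝ))
      = (-Real.sin θ) • EuclideanSpace.single (⟨0, h0⟩ : Fin d) (1:ℝ)
        + Real.cos θ • EuclideanSpace.single (⟨1, h1⟩ : Fin d) (1:ℝ) := by
  ext j
  simp only [RotPt_apply, PiLp.add_apply, PiLp.smul_apply, smul_eq_mul,
    single_nth d _ 0 h0, single_nth d _ 1 h1, EuclideanSpace.single_apply]
  split_ifs with hj hj' <;> simp_all [Fin.ext_iff] <;> ring

lemma RotPt_single_ge (d : ℕ) (θ : ℝ) (i : Fin d) (hi : 2 ≤ (i : ℕ)) :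
    RotPt d θ (EuclideanSpace.single i (1:ℝ)) = EuclideanSpace.single i (1:ℝ) := by
  have h0 : (0:ℕ) < d := lt_of_le_of_lt (Nat.zero_le _) i.2
  have h1 : (1:ℕ) < d := lt_of_le_of_lt (by omega) i.2
  ext j
  simp only [RotPt_apply, single_nth d _ 0 h0, single_nth d _ 1 h1,
    EuclideanSpace.single_apply]
  have hi0 : (i:ℕ) ≠ 0 := by omega
  have hi1 : (i:ℕ) ≠ 1 := by omega
  split_ifs with hj hj' <;> simp_all [Fin.ext_iff] <;> omega

lemma fderiv_rot_apply (d : ℕ) (hd : 2 ≤ d) (θ : ℝ) (f : Pt d → ℂ)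
    (hf : Differentiable ℝ f) (x v : Pt d) :
    fderiv ℝ (fun y => f (RotPt d θ y)) x v = fderiv ℝ f (RotPt d θ x) (RotPt d θ v) := by
  have hA : HasFDerivAt (fun y : Pt d => RotPt d θ y)
      ((rotLI d hd θ).toContinuousLinearEquiv : Pt d →L[ℝ] Pt d) x :=
    (rotLI d hd θ).toContinuousLinearEquiv.hasFDerivAt
  have h := ((hf (RotPt d θ x)).hasFDerivAt.comp x hA).fderiv
  rw [show (fun y => f (RotPt d θ y)) = f ∘ (fun y : Pt d => RotPt d θ y) from rfl, h]
  rfl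

lemma pdC_rot0 (d : ℕ) (hd : 2 ≤ d) (θ : ℝ) (f : Pt d → ℂ)
    (hf : Differentiable ℝ f) (x : Pt d) :
    pdC d (fun y => f (RotPt d θ y)) 0 x
      = (Real.cos θ : ℂ) * pdC d f 0 (RotPt d θ x) + (Real.sin θ : ℂ) * pdC d f 1 (RotPt d θ x) := by
  have h0 : (0:ℕ) < d := by omega
  have h1 : (1:ℕ) < d := by omega
  simp only [pdC, dif_pos h0, dif_pos h1]
  rw [fderiv_rot_apply d hd θ f hf, RotPt_single0 d h0 h1 θ, map_add,
    ContinuousLinearMap.map_smul, ContinuousLinearMap.map_smul]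
  simp [Complex.real_smul]

lemma pdC_rot1 (d : ℕ) (hd : 2 ≤ d) (θ : ℝ) (f : Pt d → ℂ)
    (hf : Differentiable ℝ f) (x : Pt d) :
    pdC d (fun y => f (RotPt d θ y)) 1 x
      = -(Real.sin θ : ℂ) * pdC d f 0 (RotPt d θ x) + (Real.cos θ : ℂ) * pdC d f 1 (RotPt d θ x) := by
  have h0 : (0:ℕ) < d := by omega
  have h1 : (1:ℕ) < d := by omega
  simp only [pdC, dif_pos h0, dif_pos h1]
  rw [fderiv_rot_apply d hd θ f hf, RotPt_single1 d h0 h1 θ, map_add,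
    ContinuousLinearMap.map_smul, ContinuousLinearMap.map_smul]
  simp [Complex.real_smul]

lemma pdC_rot_ge (d : ℕ) (hd : 2 ≤ d) (θ : ℝ) (f : Pt d → ℂ)
    (hf : Differentiable ℝ f) (x : Pt d) (j : ℕ) (hj : 2 ≤ j) :
    pdC d (fun y => f (RotPt d θ y)) j x = pdC d f j (RotPt d θ x) := by
  unfold pdC
  split_ifs with h
  · rw [fderiv_rot_apply d hd θ f hf, RotPt_single_ge d θ ⟨j, h⟩ hj]
  · rfl


/-- Auxiliary integrand for the rotated SOC energy. -/
def Wden (d : ℕ) (φ1 φ0 φm1 : Pt d → ℂ) (x : Pt d) : ℝ :=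
  ((starRingEnd ℂ) (φ1 x) * L0op d φ0 x + (starRingEnd ℂ) (φ0 x) * L0op d φm1 x
    - (starRingEnd ℂ) (φ0 x) * L1op d φ1 x - (starRingEnd ℂ) (φm1 x) * L1op d φ0 x).im

lemma L0op_rot (d : ℕ) (hd : 2 ≤ d) (θ : ℝ) (f : Pt d → ℂ) (hf : Differentiable ℝ f)
    (x : Pt d) :
    L0op d (fun y => f (RotPt d θ y)) x
      = ((Real.cos θ : ℂ) + (Real.sin θ : ℂ) * Complex.I) * L0op d f (RotPt d θ x) := by
  unfold L0op
  rw [pdC_rot0 d hd θ f hf x, pdC_rot1 d hd θ f hf x]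
  linear_combination (-(Real.sin θ : ℂ) * pdC d f 0 (RotPt d θ x)) * Complex.I_sq

lemma L1op_rot (d : ℕ) (hd : 2 ≤ d) (θ : ℝ) (f : Pt d → ℂ) (hf : Differentiable ℝ f)
    (x : Pt d) :
    L1op d (fun y => f (RotPt d θ y)) x
      = ((Real.cos θ : ℂ) - (Real.sin θ : ℂ) * Complex.I) * L1op d f (RotPt d θ x) := by
  unfold L1op
  rw [pdC_rot0 d hd θ f hf x, pdC_rot1 d hd θ f hf x]
  linear_combination ((Real.sin θ : ℂ) * pdC d f 0 (RotPt d θ x)) * Complex.I_sq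

lemma Lzop_rot (d : ℕ) (hd : 2 ≤ d) (θ : ℝ) (f : Pt d → ℂ) (hf : Differentiable ℝ f)
    (x : Pt d) :
    Lzop d (fun y => f (RotPt d θ y)) x = Lzop d f (RotPt d θ x) := by
  unfold Lzop
  obtain ⟨e0, e1⟩ := nthC_rot d hd θ x
  rw [pdC_rot0 d hd θ f hf x, pdC_rot1 d hd θ f hf x, e0, e1]
  push_cast
  ring

lemma rotDen_rot (d : ℕ) (hd : 2 ≤ d) (θ : ℝ) (f : Pt d → ℂ) (hf : Differentiable ℝ f)
    (x : Pt d) :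
    rotDen d (fun y => f (RotPt d θ y)) x = rotDen d f (RotPt d θ x) := by
  unfold rotDen
  rw [Lzop_rot d hd θ f hf x]

lemma socDen_rot (d : ℕ) (hd : 2 ≤ d) (θ : ℝ) (φ1 φ0 φm1 : Pt d → ℂ)
    (h1 : Differentiable ℝ φ1) (h0 : Differentiable ℝ φ0) (hm1 : Differentiable ℝ φm1)
    (x : Pt d) :
    socDen d (fun y => φ1 (RotPt d θ y)) (fun y => φ0 (RotPt d θ y))
        (fun y => φm1 (RotPt d θ y)) x
      = Real.cos θ * socDen d φ1 φ0 φm1 (RotPt d θ x)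
        - Real.sin θ * Wden d φ1 φ0 φm1 (RotPt d θ x) := by
  unfold socDen Wden
  rw [L0op_rot d hd θ φ0 h0 x, L0op_rot d hd θ φm1 hm1 x, L1op_rot d hd θ φ1 h1 x,
    L1op_rot d hd θ φ0 h0 x]
  simp only [Complex.add_re, Complex.mul_re, Complex.mul_im, Complex.add_im, Complex.sub_re,
    Complex.sub_im, Complex.I_re, Complex.I_im, Complex.ofReal_re, Complex.ofReal_im]
  ring

lemma cnorm_sq (z : ℂ) : ‖z‖ ^ 2 = z.re ^ 2 + z.im ^ 2 := by
  rw [Complex.sq_norm, Complex.normSq_apply]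
  ring

lemma norm_pair_rot (c s : ℝ) (h : s ^ 2 + c ^ 2 = 1) (a b : ℂ) :
    ‖(c:ℂ) * a + (s:ℂ) * b‖ ^ 2 + ‖-(s:ℂ) * a + (c:ℂ) * b‖ ^ 2 = ‖a‖ ^ 2 + ‖b‖ ^ 2 := by
  simp only [cnorm_sq, Complex.add_re, Complex.add_im, Complex.mul_re, Complex.mul_im,
    Complex.neg_re, Complex.neg_im, Complex.ofReal_re, Complex.ofReal_im]
  linear_combination h * (a.re ^ 2 + a.im ^ 2 + b.re ^ 2 + b.im ^ 2)

lemma gradsq_rot (d : ℕ) (hd : 2 ≤ d) (θ : ℝ) (f : Pt d → ℂ) (hf : Differentiable ℝ f)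
    (x : Pt d) :
    gradsq d (fun y => f (RotPt d θ y)) x = gradsq d f (RotPt d θ x) := by
  have h0 : (0:ℕ) < d := by omega
  have h1 : (1:ℕ) < d := by omega
  set i0 : Fin d := ⟨0, h0⟩
  set i1 : Fin d := ⟨1, h1⟩
  have hne : i0 ≠ i1 := by simp [i0, i1, Fin.ext_iff]
  unfold gradsq
  have key : ∀ j : Fin d, j ∉ ({i0, i1} : Finset (Fin d)) →
      ‖pdC d (fun y => f (RotPt d θ y)) (j:ℕ) x‖ ^ 2 - ‖pdC d f (j:ℕ) (RotPt d θ x)‖ ^ 2 = 0 := by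
    intro j hj
    have hj0 : (j:ℕ) ≠ 0 := by
      intro h; exact hj (by simp [Finset.mem_insert, Fin.ext_iff, i0, i1, h])
    have hj1 : (j:ℕ) ≠ 1 := by
      intro h; exact hj (by simp [Finset.mem_insert, Fin.ext_iff, i0, i1, h])
    rw [pdC_rot_ge d hd θ f hf x (j:ℕ) (by omega)]
    ring
  have hsub : ∑ j ∈ ({i0, i1} : Finset (Fin d)),
        (‖pdC d (fun y => f (RotPt d θ y)) (j:ℕ) x‖ ^ 2 - ‖pdC d f (j:ℕ) (RotPt d θ x)‖ ^ 2)
      = ∑ j : Fin d,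
        (‖pdC d (fun y => f (RotPt d θ y)) (j:ℕ) x‖ ^ 2 - ‖pdC d f (j:ℕ) (RotPt d θ x)‖ ^ 2) :=
    Finset.sum_subset (Finset.subset_univ _) (fun j _ hj => key j hj)
  rw [Finset.sum_pair hne] at hsub
  have hz : (‖pdC d (fun y => f (RotPt d θ y)) ((i0:Fin d):ℕ) x‖ ^ 2
        - ‖pdC d f ((i0:Fin d):ℕ) (RotPt d θ x)‖ ^ 2)
      + (‖pdC d (fun y => f (RotPt d θ y)) ((i1:Fin d):ℕ) x‖ ^ 2
        - ‖pdC d f ((i1:Fin d):ℕ) (RotPt d θ x)‖ ^ 2) = 0 := by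
    have c0 : ((i0 : Fin d) : ℕ) = 0 := rfl
    have c1 : ((i1 : Fin d) : ℕ) = 1 := rfl
    rw [c0, c1, pdC_rot0 d hd θ f hf x, pdC_rot1 d hd θ f hf x]
    have := norm_pair_rot (Real.cos θ) (Real.sin θ) (Real.sin_sq_add_cos_sq θ)
      (pdC d f 0 (RotPt d θ x)) (pdC d f 1 (RotPt d θ x))
    push_cast at this ⊢
    linarith [this]
  rw [hz] at hsub
  have hd2 := Finset.sum_sub_distrib (s := (Finset.univ : Finset (Fin d)))
    (f := fun j : Fin d => ‖pdC d (fun y => f (RotPt d θ y)) (j:ℕ) x‖ ^ 2)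
    (g := fun j : Fin d => ‖pdC d f (j:ℕ) (RotPt d θ x)‖ ^ 2)
  rw [← hsub] at hd2
  linarith [hd2]

lemma rho_rot (d : ℕ) (θ : ℝ) (φ1 φ0 φm1 : Pt d → ℂ) (x : Pt d) :
    rho d (fun y => φ1 (RotPt d θ y)) (fun y => φ0 (RotPt d θ y))
      (fun y => φm1 (RotPt d θ y)) x = rho d φ1 φ0 φm1 (RotPt d θ x) := rfl

lemma Fsq_rot (d : ℕ) (θ : ℝ) (φ1 φ0 φm1 : Pt d → ℂ) (x : Pt d) :
    Fsq d (fun y => φ1 (RotPt d θ y)) (fun y => φ0 (RotPt d θ y))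
      (fun y => φm1 (RotPt d θ y)) x = Fsq d φ1 φ0 φm1 (RotPt d θ x) := rfl

lemma meas_pdC (d : ℕ) (f : Pt d → ℂ) (j : ℕ) : Measurable fun x => pdC d f j x := by
  unfold pdC
  split_ifs with h
  · exact measurable_fderiv_apply_const ℝ f _
  · exact measurable_const

lemma meas_L0op (d : ℕ) (f : Pt d → ℂ) : Measurable fun x => L0op d f x := by
  unfold L0op
  exact (measurable_const.mul (meas_pdC d f 0)).add (meas_pdC d f 1)

lemma meas_L1op (d : ℕ) (f : Pt d → ℂ) : Measurable fun x => L1op d f x := by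
  unfold L1op
  exact (measurable_const.mul (meas_pdC d f 0)).sub (meas_pdC d f 1)

lemma meas_Wden (d : ℕ) (φ1 φ0 φm1 : Pt d → ℂ)
    (h1 : Differentiable ℝ φ1) (h0 : Differentiable ℝ φ0) (hm1 : Differentiable ℝ φm1) :
    Measurable (Wden d φ1 φ0 φm1) := by
  have m1 : Measurable fun x => (starRingEnd ℂ) (φ1 x) :=
    Complex.continuous_conj.measurable.comp h1.continuous.measurable
  have m0 : Measurable fun x => (starRingEnd ℂ) (φ0 x) :=
    Complex.continuous_conj.measurable.comp h0.continuous.measurable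
  have mm1 : Measurable fun x => (starRingEnd ℂ) (φm1 x) :=
    Complex.continuous_conj.measurable.comp hm1.continuous.measurable
  unfold Wden
  exact Complex.measurable_im.comp
    ((((m1.mul (meas_L0op d φ0)).add (m0.mul (meas_L0op d φm1))).sub
      (m0.mul (meas_L1op d φ1))).sub (mm1.mul (meas_L1op d φ0)))

lemma pd_sq2_le_gradsq (d : ℕ) (hd : 2 ≤ d) (f : Pt d → ℂ) (x : Pt d) :
    ‖pdC d f 0 x‖ ^ 2 + ‖pdC d f 1 x‖ ^ 2 ≤ gradsq d f x := by
  have h0 : (0:ℕ) < d := by omega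
  have h1 : (1:ℕ) < d := by omega
  set i0 : Fin d := ⟨0, h0⟩
  set i1 : Fin d := ⟨1, h1⟩
  have hne : i0 ≠ i1 := by simp [i0, i1, Fin.ext_iff]
  unfold gradsq
  have hsub : ∑ j ∈ ({i0, i1} : Finset (Fin d)), ‖pdC d f (j:ℕ) x‖ ^ 2
      ≤ ∑ j : Fin d, ‖pdC d f (j:ℕ) x‖ ^ 2 :=
    Finset.sum_le_sum_of_subset_of_nonneg (Finset.subset_univ _) (fun j _ _ => sq_nonneg _)
  rw [Finset.sum_pair hne] at hsub
  exact hsub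

set_option maxHeartbeats 1600000 in
lemma Wden_abs_le (d : ℕ) (hd : 2 ≤ d) (φ1 φ0 φm1 : Pt d → ℂ) (x : Pt d) :
    ‖Wden d φ1 φ0 φm1 x‖
      ≤ 2 * rho d φ1 φ0 φm1 x + 2 * (gradsq d φ1 x + gradsq d φ0 x + gradsq d φm1 x) := by
  set a := (starRingEnd ℂ) (φ1 x) * L0op d φ0 x with ha
  set b := (starRingEnd ℂ) (φ0 x) * L0op d φm1 x with hb
  set c := (starRingEnd ℂ) (φ0 x) * L1op d φ1 x with hc
  set e := (starRingEnd ℂ) (φm1 x) * L1op d φ0 x with he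
  have h1' : ‖Wden d φ1 φ0 φm1 x‖ ≤ ‖a + b - c - e‖ := by
    rw [Wden, Real.norm_eq_abs]
    exact Complex.abs_im_le_norm _
  have h2' : ‖a + b - c - e‖ ≤ ‖a‖ + ‖b‖ + ‖c‖ + ‖e‖ := by
    calc ‖a + b - c - e‖ ≤ ‖a + b - c‖ + ‖e‖ := norm_sub_le _ _
      _ ≤ ‖a + b‖ + ‖c‖ + ‖e‖ := by have := norm_sub_le (a + b) c; linarith
      _ ≤ ‖a‖ + ‖b‖ + ‖c‖ + ‖e‖ := by have := norm_add_le a b; linarith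
  have hL0 : ∀ f : Pt d → ℂ, ‖L0op d f x‖ ≤ ‖pdC d f 0 x‖ + ‖pdC d f 1 x‖ := by
    intro f
    calc ‖Complex.I * pdC d f 0 x + pdC d f 1 x‖
        ≤ ‖Complex.I * pdC d f 0 x‖ + ‖pdC d f 1 x‖ := norm_add_le _ _
      _ = ‖pdC d f 0 x‖ + ‖pdC d f 1 x‖ := by rw [norm_mul, Complex.norm_I, one_mul]
  have hL1 : ∀ f : Pt d → ℂ, ‖L1op d f x‖ ≤ ‖pdC d f 0 x‖ + ‖pdC d f 1 x‖ := by
    intro f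
    calc ‖Complex.I * pdC d f 0 x - pdC d f 1 x‖
        ≤ ‖Complex.I * pdC d f 0 x‖ + ‖pdC d f 1 x‖ := norm_sub_le _ _
      _ = ‖pdC d f 0 x‖ + ‖pdC d f 1 x‖ := by rw [norm_mul, Complex.norm_I, one_mul]
  have hna : ‖a‖ = ‖φ1 x‖ * ‖L0op d φ0 x‖ := by rw [ha, norm_mul, RCLike.norm_conj]
  have hnb : ‖b‖ = ‖φ0 x‖ * ‖L0op d φm1 x‖ := by rw [hb, norm_mul, RCLike.norm_conj]
  have hnc : ‖c‖ = ‖φ0 x‖ * ‖L1op d φ1 x‖ := by rw [hc, norm_mul, RCLike.norm_conj]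
  have hne' : ‖e‖ = ‖φm1 x‖ * ‖L1op d φ0 x‖ := by rw [he, norm_mul, RCLike.norm_conj]
  have g1 := pd_sq2_le_gradsq d hd φ1 x
  have g0 := pd_sq2_le_gradsq d hd φ0 x
  have gm := pd_sq2_le_gradsq d hd φm1 x
  have p1 : ‖φ1 x‖ * ‖L0op d φ0 x‖
      ≤ ‖φ1 x‖ ^ 2 + (‖pdC d φ0 0 x‖ ^ 2 + ‖pdC d φ0 1 x‖ ^ 2) / 2 := by
    nlinarith [mul_le_mul_of_nonneg_left (hL0 φ0) (norm_nonneg (φ1 x)),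
      sq_nonneg (‖φ1 x‖ - ‖pdC d φ0 0 x‖), sq_nonneg (‖φ1 x‖ - ‖pdC d φ0 1 x‖)]
  have p2 : ‖φ0 x‖ * ‖L0op d φm1 x‖
      ≤ ‖φ0 x‖ ^ 2 + (‖pdC d φm1 0 x‖ ^ 2 + ‖pdC d φm1 1 x‖ ^ 2) / 2 := by
    nlinarith [mul_le_mul_of_nonneg_left (hL0 φm1) (norm_nonneg (φ0 x)),
      sq_nonneg (‖φ0 x‖ - ‖pdC d φm1 0 x‖), sq_nonneg (‖φ0 x‖ - ‖pdC d φm1 1 x‖)]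
  have p3 : ‖φ0 x‖ * ‖L1op d φ1 x‖
      ≤ ‖φ0 x‖ ^ 2 + (‖pdC d φ1 0 x‖ ^ 2 + ‖pdC d φ1 1 x‖ ^ 2) / 2 := by
    nlinarith [mul_le_mul_of_nonneg_left (hL1 φ1) (norm_nonneg (φ0 x)),
      sq_nonneg (‖φ0 x‖ - ‖pdC d φ1 0 x‖), sq_nonneg (‖φ0 x‖ - ‖pdC d φ1 1 x‖)]
  have p4 : ‖φm1 x‖ * ‖L1op d φ0 x‖
      ≤ ‖φm1 x‖ ^ 2 + (‖pdC d φ0 0 x‖ ^ 2 + ‖pdC d φ0 1 x‖ ^ 2) / 2 := by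
    nlinarith [mul_le_mul_of_nonneg_left (hL1 φ0) (norm_nonneg (φm1 x)),
      sq_nonneg (‖φm1 x‖ - ‖pdC d φ0 0 x‖), sq_nonneg (‖φm1 x‖ - ‖pdC d φ0 1 x‖)]
  unfold rho
  linarith [sq_nonneg ‖φ1 x‖, sq_nonneg ‖φ0 x‖, sq_nonneg ‖φm1 x‖,
    sq_nonneg ‖pdC d φ0 0 x‖, sq_nonneg ‖pdC d φ0 1 x‖,
    sq_nonneg ‖pdC d φ1 0 x‖, sq_nonneg ‖pdC d φ1 1 x‖,
    sq_nonneg ‖pdC d φm1 0 x‖, sq_nonneg ‖pdC d φm1 1 x‖]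

lemma Wden_integrable (d : ℕ) (hd : 2 ≤ d) (V : Pt d → ℝ) (φ1 φ0 φm1 : Pt d → ℂ)
    (hM : InM d V φ1 φ0 φm1) : Integrable (Wden d φ1 φ0 φm1) := by
  obtain ⟨h1, h0, hm1, hrho, hgrad, -⟩ := hM
  have hbound : Integrable (fun x => 2 * rho d φ1 φ0 φm1 x
      + 2 * (gradsq d φ1 x + gradsq d φ0 x + gradsq d φm1 x)) :=
    (hrho.const_mul 2).add (hgrad.const_mul 2)
  exact hbound.mono' ((meas_Wden d φ1 φ0 φm1 h1 h0 hm1).aestronglyMeasurable)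
    (Filter.Eventually.of_forall (fun x => Wden_abs_le d hd φ1 φ0 φm1 x))

lemma integrable_rot (d : ℕ) (hd : 2 ≤ d) (θ : ℝ) (g : Pt d → ℝ) (hg : Integrable g) :
    Integrable (fun x => g (RotPt d θ x)) :=
  (MeasureTheory.integrable_comp (rotLI d hd θ) g).2 hg

lemma integral_rot (d : ℕ) (hd : 2 ≤ d) (θ : ℝ) (g : Pt d → ℝ) :
    ∫ x, g (RotPt d θ x) = ∫ x, g x :=
  MeasureTheory.integral_comp (rotLI d hd θ) g

lemma rot_energy (d : ℕ) (hd : 2 ≤ d) (V : Pt d → ℝ)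
    (hrad : ∀ x y : Pt d, ‖x‖ = ‖y‖ → V x = V y)
    (c0 c1 Ω γ : ℝ) (g1 g0 gm1 : Pt d → ℂ) (hg : InM d V g1 g0 gm1) (θ : ℝ) :
    InM d V (fun x => g1 (RotPt d θ x)) (fun x => g0 (RotPt d θ x)) (fun x => gm1 (RotPt d θ x))
    ∧ Etot d V c0 c1 Ω γ (fun x => g1 (RotPt d θ x)) (fun x => g0 (RotPt d θ x))
        (fun x => gm1 (RotPt d θ x))
      = Etot d V c0 c1 Ω γ g1 g0 gm1 + (Real.cos θ - 1) * Esoc d γ g1 g0 gm1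
        + Real.sin θ * (γ * ∫ x, Wden d g1 g0 gm1 x) := by
  obtain ⟨hd1, hd0, hdm, hirho, higrad, hiV, hirho2, hiF, hirot, hisoc, hmass⟩ := hg
  have hWint : Integrable (Wden d g1 g0 gm1) :=
    Wden_integrable d hd V g1 g0 gm1
      ⟨hd1, hd0, hdm, hirho, higrad, hiV, hirho2, hiF, hirot, hisoc, hmass⟩
  have hAdiff : Differentiable ℝ (fun x : Pt d => RotPt d θ x) :=
    (rotLI d hd θ).toContinuousLinearEquiv.differentiable
  have hD1 : Differentiable ℝ (fun x => g1 (RotPt d θ x)) := hd1.comp hAdiff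
  have hD0 : Differentiable ℝ (fun x => g0 (RotPt d θ x)) := hd0.comp hAdiff
  have hDm : Differentiable ℝ (fun x => gm1 (RotPt d θ x)) := hdm.comp hAdiff
  -- function rewrites
  have hgr : (fun x => gradsq d (fun y => g1 (RotPt d θ y)) x
        + gradsq d (fun y => g0 (RotPt d θ y)) x + gradsq d (fun y => gm1 (RotPt d θ y)) x)
      = fun x => (fun y => gradsq d g1 y + gradsq d g0 y + gradsq d gm1 y) (RotPt d θ x) := by
    funext x
    simp only [gradsq_rot d hd θ g1 hd1 x, gradsq_rot d hd θ g0 hd0 x,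
      gradsq_rot d hd θ gm1 hdm x]
  have hVr : (fun x => V x * rho d (fun y => g1 (RotPt d θ y)) (fun y => g0 (RotPt d θ y))
        (fun y => gm1 (RotPt d θ y)) x)
      = fun x => (fun y => V y * rho d g1 g0 gm1 y) (RotPt d θ x) := by
    funext x
    have : V (RotPt d θ x) = V x := hrad (RotPt d θ x) x (RotPt_norm d hd θ x)
    simp only [rho_rot, this]
  have hrr : (fun x => rotDen d (fun y => g1 (RotPt d θ y)) x
        + rotDen d (fun y => g0 (RotPt d θ y)) x + rotDen d (fun y => gm1 (RotPt d θ y)) x)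
      = fun x => (fun y => rotDen d g1 y + rotDen d g0 y + rotDen d gm1 y) (RotPt d θ x) := by
    funext x
    simp only [rotDen_rot d hd θ g1 hd1 x, rotDen_rot d hd θ g0 hd0 x,
      rotDen_rot d hd θ gm1 hdm x]
  have hsr : (fun x => socDen d (fun y => g1 (RotPt d θ y)) (fun y => g0 (RotPt d θ y))
        (fun y => gm1 (RotPt d θ y)) x)
      = fun x => Real.cos θ * (fun y => socDen d g1 g0 gm1 y) (RotPt d θ x)
        - Real.sin θ * (fun y => Wden d g1 g0 gm1 y) (RotPt d θ x) := by
    funext x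
    exact socDen_rot d hd θ g1 g0 gm1 hd1 hd0 hdm x
  have hInM : InM d V (fun x => g1 (RotPt d θ x)) (fun x => g0 (RotPt d θ x))
      (fun x => gm1 (RotPt d θ x)) := by
    refine ⟨hD1, hD0, hDm, ?_, ?_, ?_, ?_, ?_, ?_, ?_, ?_⟩
    · exact integrable_rot d hd θ (fun y => rho d g1 g0 gm1 y) hirho
    · rw [hgr]; exact integrable_rot d hd θ _ higrad
    · rw [hVr]; exact integrable_rot d hd θ _ hiV
    · exact integrable_rot d hd θ (fun y => (rho d g1 g0 gm1 y) ^ 2) hirho2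
    · exact integrable_rot d hd θ (fun y => Fsq d g1 g0 gm1 y) hiF
    · rw [hrr]; exact integrable_rot d hd θ _ hirot
    · rw [hsr]
      exact ((integrable_rot d hd θ _ hisoc).const_mul _).sub
        ((integrable_rot d hd θ _ hWint).const_mul _)
    · exact (integral_rot d hd θ (fun y => rho d g1 g0 gm1 y)).trans hmass
  refine ⟨hInM, ?_⟩
  have hEkin : Ekin d (fun x => g1 (RotPt d θ x)) (fun x => g0 (RotPt d θ x))
      (fun x => gm1 (RotPt d θ x)) = Ekin d g1 g0 gm1 := by
    unfold Ekin
    rw [hgr, integral_rot d hd θ (fun y => gradsq d g1 y + gradsq d g0 y + gradsq d gm1 y)]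
  have hEpot : Epot d V (fun x => g1 (RotPt d θ x)) (fun x => g0 (RotPt d θ x))
      (fun x => gm1 (RotPt d θ x)) = Epot d V g1 g0 gm1 := by
    unfold Epot
    rw [hVr, integral_rot d hd θ (fun y => V y * rho d g1 g0 gm1 y)]
  have hEspin : Espin d c0 c1 (fun x => g1 (RotPt d θ x)) (fun x => g0 (RotPt d θ x))
      (fun x => gm1 (RotPt d θ x)) = Espin d c0 c1 g1 g0 gm1 := by
    unfold Espin
    have : (fun x => c0 / 2 * (rho d (fun y => g1 (RotPt d θ y)) (fun y => g0 (RotPt d θ y))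
          (fun y => gm1 (RotPt d θ y)) x) ^ 2
        + c1 / 2 * Fsq d (fun y => g1 (RotPt d θ y)) (fun y => g0 (RotPt d θ y))
          (fun y => gm1 (RotPt d θ y)) x)
        = fun x => (fun y => c0 / 2 * (rho d g1 g0 gm1 y) ^ 2 + c1 / 2 * Fsq d g1 g0 gm1 y)
            (RotPt d θ x) := by
      funext x
      simp only [rho_rot, Fsq_rot]
    rw [this, integral_rot d hd θ
      (fun y => c0 / 2 * (rho d g1 g0 gm1 y) ^ 2 + c1 / 2 * Fsq d g1 g0 gm1 y)]
  have hErot : Erot d Ω (fun x => g1 (RotPt d θ x)) (fun x => g0 (RotPt d θ x))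
      (fun x => gm1 (RotPt d θ x)) = Erot d Ω g1 g0 gm1 := by
    unfold Erot
    rw [hrr, integral_rot d hd θ (fun y => rotDen d g1 y + rotDen d g0 y + rotDen d gm1 y)]
  have hEsoc : Esoc d γ (fun x => g1 (RotPt d θ x)) (fun x => g0 (RotPt d θ x))
      (fun x => gm1 (RotPt d θ x))
      = Real.cos θ * Esoc d γ g1 g0 gm1 + Real.sin θ * (γ * ∫ x, Wden d g1 g0 gm1 x) := by
    unfold Esoc
    rw [hsr, integral_sub ((integrable_rot d hd θ _ hisoc).const_mul _)
      ((integrable_rot d hd θ _ hWint).const_mul _),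
      MeasureTheory.integral_const_mul, MeasureTheory.integral_const_mul,
      integral_rot d hd θ (fun y => socDen d g1 g0 gm1 y),
      integral_rot d hd θ (fun y => Wden d g1 g0 gm1 y)]
    ring
  unfold Etot
  rw [hEkin, hEpot, hEspin, hErot, hEsoc]
  unfold Esoc
  ring

/-- If `Φ_g` is a ground state in a radially symmetric trap with `E_soc(Φ_g) = 0`,
then every rotated function `Φ^θ`, `θ ∈ (0, 2π)`, is also a ground state; whereas if
`E_soc(Φ_g) < 0`, then `E(Φ^θ) > E(Φ_g)` for every `θ ∈ (0, 2π)`, so `Φ^θ` is not a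
ground state. -/
theorem stmt14 (d : ℕ) (hd2 : 2 ≤ d) (hd3 : d ≤ 3)
    (c0 c1 Ω γ : ℝ) (V : Pt d → ℝ)
    (hrad : ∀ x y : Pt d, ‖x‖ = ‖y‖ → V x = V y)
    (g1 g0 gm1 : Pt d → ℂ) (hg : InM d V g1 g0 gm1)
    (hmin : ∀ ψ1 ψ0 ψm1 : Pt d → ℂ, InM d V ψ1 ψ0 ψm1 →
      Etot d V c0 c1 Ω γ g1 g0 gm1 ≤ Etot d V c0 c1 Ω γ ψ1 ψ0 ψm1) :
    (Esoc d γ g1 g0 gm1 = 0 →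
      ∀ θ ∈ Set.Ioo (0 : ℝ) (2 * Real.pi),
        InM d V (fun x => g1 (RotPt d θ x)) (fun x => g0 (RotPt d θ x))
          (fun x => gm1 (RotPt d θ x)) ∧
        ∀ ψ1 ψ0 ψm1 : Pt d → ℂ, InM d V ψ1 ψ0 ψm1 →
          Etot d V c0 c1 Ω γ (fun x => g1 (RotPt d θ x)) (fun x => g0 (RotPt d θ x))
              (fun x => gm1 (RotPt d θ x))
            ≤ Etot d V c0 c1 Ω γ ψ1 ψ0 ψm1) ∧
    (Esoc d γ g1 g0 gm1 < 0 →
      ∀ θ ∈ Set.Ioo (0 : ℝ) (2 * Real.pi),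
        Etot d V c0 c1 Ω γ g1 g0 gm1
          < Etot d V c0 c1 Ω γ (fun x => g1 (RotPt d θ x)) (fun x => g0 (RotPt d θ x))
              (fun x => gm1 (RotPt d θ x))) := by
  have key := fun θ : ℝ => rot_energy d hd2 V hrad c0 c1 Ω γ g1 g0 gm1 hg θ
  set E := Esoc d γ g1 g0 gm1 with hE
  set T := γ * ∫ x, Wden d g1 g0 gm1 x with hTdef
  have hG : ∀ θ : ℝ, 0 ≤ (Real.cos θ - 1) * E + Real.sin θ * T := by
    intro θ
    have h1 := hmin _ _ _ (key θ).1
    have h2 := (key θ).2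
    linarith
  have hT0 : T = 0 := by
    set G : ℝ → ℝ := fun θ => (Real.cos θ - 1) * E + Real.sin θ * T with hGdef
    have hG0 : G 0 = 0 := by simp [hGdef]
    have hmin0 : IsLocalMin G 0 :=
      Filter.Eventually.of_forall fun θ => by rw [hG0]; exact hG θ
    have hder : HasDerivAt G T 0 := by
      have h1 : HasDerivAt (fun θ : ℝ => (Real.cos θ - 1) * E + Real.sin θ * T)
          (-Real.sin 0 * E + Real.cos 0 * T) 0 :=
        (((Real.hasDerivAt_cos 0).sub_const 1).mul_const E).add
          ((Real.hasDerivAt_sin 0).mul_const T)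
      have : -Real.sin 0 * E + Real.cos 0 * T = T := by simp
      rw [this] at h1
      exact h1
    have hd0 := hmin0.deriv_eq_zero
    rwa [hder.deriv] at hd0
  constructor
  · intro hE0 θ hθ
    refine ⟨(key θ).1, ?_⟩
    intro ψ1 ψ0 ψm1 hψ
    have h2 := (key θ).2
    rw [hT0, hE0] at h2
    have h3 := hmin ψ1 ψ0 ψm1 hψ
    linarith
  · intro hEneg θ hθ
    have h2 := (key θ).2
    rw [hT0] at h2
    have hcos : Real.cos θ < 1 := by
      rcases lt_or_eq_of_le (Real.cos_le_one θ) with h | h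
      · exact h
      · exfalso
        have hpi := Real.pi_pos
        have := (Real.cos_eq_one_iff_of_lt_of_lt
          (by linarith [hθ.1] : -(2 * Real.pi) < θ) hθ.2).1 h
        linarith [hθ.1]
    have hpos : 0 < (Real.cos θ - 1) * E := mul_pos_of_neg_of_neg (by linarith) hEneg
    linarith


end
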